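/- For every non-degenerate normalized class adjacency matrix C, the matrix rand(C) with entries rand(C)_{ij} = a_i·a_j (where a_i = ∑_k c_ik) satisfies h_unb(rand(C)) = 0 (constant baseline for unbiased homophily with α = 0). -/
import Mathlib


/-- A normalized class adjacency matrix: symmetric, nonnegative entries, entries sum to 1. -/
def IsNCAM {m : ℕ} (C : Matrix (Fin m) (Fin m) ℝ) : Prop :=
  (∀ i j, C i j = C j i) ∧ (∀ i j, 0 ≤ C i j) ∧ (∑ i : Fin m, ∑ j : Fin m, C i j = 1)

/-- Non-degenerate: at least two nonzero entries. -/
def Nondeg {m : ℕ} (C : Matrix (Fin m) (Fin m) ℝ) : Prop :=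
  ∃ p q : Fin m × Fin m, p ≠ q ∧ C p.1 p.2 ≠ 0 ∧ C q.1 q.2 ≠ 0

/-- Unbiased homophily (α = 0). -/
noncomputable def hUnb {m : ℕ} (C : Matrix (Fin m) (Fin m) ℝ) : ℝ :=
  (∑ i : Fin m, ∑ j : Fin m, if i < j then Real.sqrt (C i i * C j j) - C i j else 0) /
  (∑ i : Fin m, ∑ j : Fin m, if i < j then Real.sqrt (C i i * C j j) + C i j else 0)

/-- Unbiased homophily with parameter α. -/
noncomputable def hUnbAlpha {m : ℕ} (α : ℝ) (C : Matrix (Fin m) (Fin m) ℝ) : ℝ :=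
  hUnb C + α * min (∑ i : Fin m, Real.sqrt (C i i)) 1

/-- rand(C) for undirected graphs: rand(C)_{ij} = a_i · a_j where a_i = ∑_k c_{ik}. -/
noncomputable def randM {m : ℕ} (C : Matrix (Fin m) (Fin m) ℝ) : Matrix (Fin m) (Fin m) ℝ :=
  Matrix.of fun i j => (∑ k : Fin m, C i k) * (∑ k : Fin m, C j k)
/-- constant baseline for unbiased homophily with α = 0. -/
theorem constant_baseline_unb {m : ℕ}
    (C : Matrix (Fin m) (Fin m) ℝ) (hC : IsNCAM C) (hnd : Nondeg C) :
    hUnb (randM C) = 0 := by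
  obtain ⟨hsym, hnn, hsum⟩ := hC
  have ha : ∀ i : Fin m, 0 ≤ ∑ k : Fin m, C i k := fun i =>
    Finset.sum_nonneg fun k _ => hnn i k
  have hnum : (∑ i : Fin m, ∑ j : Fin m,
      if i < j then Real.sqrt (randM C i i * randM C j j) - randM C i j else 0) = 0 := by
    refine Finset.sum_eq_zero fun i _ => Finset.sum_eq_zero fun j _ => ?_
    split
    · simp only [randM, Matrix.of_apply]
      have : (∑ k : Fin m, C i k) * (∑ k : Fin m, C i k) *
          ((∑ k : Fin m, C j k) * (∑ k : Fin m, C j k)) =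
          ((∑ k : Fin m, C i k) * (∑ k : Fin m, C j k)) ^ 2 := by ring
      rw [this, Real.sqrt_sq (mul_nonneg (ha i) (ha j))]
      ring
    · rfl
  unfold hUnb
  rw [hnum, zero_div]
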